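/- Let K be a commutative ring, n ≥ 2, and t₁,…,t_n units of K. For all distinct indices i, j, k in {1,…,n}, the matrices U_{ij} satisfy U_{ij}·U_{ik}·U_{jk} = U_{jk}·U_{ik}·U_{ij}. -/

import Mathlib

/-- `Uij t i j` is the `n × n` matrix over `K` that equals the identity matrix except that
its entry in row `i`, column `j` is `1 - t i` and its entry in row `j`, column `j` is `t i`
(the identity with the `2 × 2` block in rows `i, j` and columns `i, j` replaced by
`((1, 1 - t_i), (0, t_i))`). -/
def GassnerUij {K : Type*} [CommRing K] {n : ℕ} (t : Fin n → K) (i j : Fin n) :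
    Matrix (Fin n) (Fin n) K :=
  Matrix.of fun r c =>
    if r = i ∧ c = j then 1 - t i
    else if r = j ∧ c = j then t i
    else if r = c then 1 else 0

lemma gassnerUij_repr {K : Type*} [CommRing K] {n : ℕ} (t : Fin n → K) (i j : Fin n)
    (hij : i ≠ j) :
    GassnerUij t i j =
      1 + Matrix.single i j (1 - t i) - Matrix.single j j (1 - t i) := by
  ext r c
  simp only [GassnerUij, Matrix.of_apply, Matrix.sub_apply, Matrix.add_apply,
    Matrix.one_apply, Matrix.single, Matrix.of_apply]
  split_ifs <;> (try casesm* _ ∧ _) <;> subst_vars <;> simp_all <;> try ring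

/-- For distinct indices `i, j, k`, the matrices `U_{ij}` of the Gassner representation of
pure v/w-braids satisfy `U_{ij}·U_{ik}·U_{jk} = U_{jk}·U_{ik}·U_{ij}`. -/
theorem gassnerUij_braid (K : Type*) [CommRing K] (n : ℕ) (hn : 2 ≤ n) (t : Fin n → Kˣ)
    (i j k : Fin n) (hij : i ≠ j) (hik : i ≠ k) (hjk : j ≠ k) :
    GassnerUij (fun l => (t l : K)) i j * GassnerUij (fun l => (t l : K)) i k *
        GassnerUij (fun l => (t l : K)) j k =
      GassnerUij (fun l => (t l : K)) j k * GassnerUij (fun l => (t l : K)) i k *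
        GassnerUij (fun l => (t l : K)) i j := by
  rw [gassnerUij_repr _ i j hij, gassnerUij_repr _ i k hik, gassnerUij_repr _ j k hjk]
  simp only [add_mul, mul_add, sub_mul, mul_sub, mul_one, one_mul,
    Matrix.single_mul_single_same,
    Matrix.single_mul_single_of_ne _ i j _ hjk,
    Matrix.single_mul_single_of_ne _ i j _ hij.symm,
    Matrix.single_mul_single_of_ne _ j j _ hij.symm,
    Matrix.single_mul_single_of_ne _ j j _ hjk,
    Matrix.single_mul_single_of_ne _ i k _ hik.symm,
    Matrix.single_mul_single_of_ne _ i k _ hjk.symm,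
    Matrix.single_mul_single_of_ne _ k k _ hik.symm,
    Matrix.single_mul_single_of_ne _ k k _ hjk.symm,
    Matrix.single_mul_single_of_ne _ j k _ hik.symm,
    Matrix.single_mul_single_of_ne _ j k _ hjk.symm]
  ring_nf
  abel
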